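/- A set $E\subset\mathbb{R}^n$ is weakly porous if and only if its closure $\overline{E}$ is weakly porous. -/

import Mathlib

open MeasureTheory Metric Set

noncomputable section

/-- An axis-parallel half-open cube in `ℝⁿ`, given by its lower corner and side length. -/
structure Cube (n : ℕ) where
  a : EuclideanSpace ℝ (Fin n)
  l : ℝ
  pos : 0 < l

/-- The set of points of a cube. -/
def Cube.set {n : ℕ} (P : Cube n) : Set (EuclideanSpace ℝ (Fin n)) :=
  {x | ∀ i, P.a i ≤ x i ∧ x i < P.a i + P.l}

/-- A weight: locally integrable and a.e. positive. -/
def IsWeight {n : ℕ} (w : EuclideanSpace ℝ (Fin n) → ℝ) : Prop :=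
  LocallyIntegrable w volume ∧ ∀ᵐ x ∂(volume : Measure (EuclideanSpace ℝ (Fin n))), 0 < w x

/-- The `A₁` inequality with constant `C`, over all axis-parallel cubes. -/
def A1With {n : ℕ} (w : EuclideanSpace ℝ (Fin n) → ℝ) (C : ℝ) : Prop :=
  ∀ P : Cube n, (⨍ x in P.set, w x) ≤ C * essInf w (volume.restrict P.set)

/-- Membership in the Muckenhoupt class `A₁`. -/
def MemA1 {n : ℕ} (w : EuclideanSpace ℝ (Fin n) → ℝ) : Prop :=
  IsWeight w ∧ ∃ C : ℝ, A1With w C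

/-- The `A_p` inequality with constant `C`, over all axis-parallel cubes. -/
def ApWith {n : ℕ} (w : EuclideanSpace ℝ (Fin n) → ℝ) (p C : ℝ) : Prop :=
  ∀ P : Cube n,
    (⨍ x in P.set, w x) * (⨍ x in P.set, w x ^ (1 / (1 - p))) ^ (p - 1) ≤ C

/-- Membership in the Muckenhoupt class `A_p`. -/
def MemAp {n : ℕ} (w : EuclideanSpace ℝ (Fin n) → ℝ) (p : ℝ) : Prop :=
  IsWeight w ∧ ∃ C : ℝ, ApWith w p C

/-- `Q` is a dyadic subcube of `P`. -/
def IsDyadicSubcube {n : ℕ} (P Q : Cube n) : Prop :=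
  ∃ (j : ℕ) (k : Fin n → ℕ), (∀ i, k i < 2 ^ j) ∧
    Q.l = P.l / 2 ^ j ∧ ∀ i, Q.a i = P.a i + P.l * k i / 2 ^ j

/-- A cube is `E`-free if it does not meet `E`. -/
def EFree {n : ℕ} (E : Set (EuclideanSpace ℝ (Fin n))) (Q : Cube n) : Prop :=
  Q.set ∩ E = ∅

/-- The measure `|𝓜(P)|` of a largest `E`-free dyadic subcube of `P`
(`0` if there is none). -/
def maxFree {n : ℕ} (E : Set (EuclideanSpace ℝ (Fin n))) (P : Cube n) : ℝ :=
  sSup {v : ℝ | ∃ Q : Cube n, IsDyadicSubcube P Q ∧ EFree E Q ∧ v = (volume Q.set).toReal}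

/-- Weak porosity with constants `c`, `δ`. -/
def WeaklyPorousWith {n : ℕ} (E : Set (EuclideanSpace ℝ (Fin n))) (c δ : ℝ) : Prop :=
  ∀ P : Cube n, ∃ (N : ℕ) (Q : Fin N → Cube n),
    (∀ k, IsDyadicSubcube P (Q k) ∧ EFree E (Q k)) ∧
    (∀ k m, k ≠ m → Disjoint (Q k).set (Q m).set) ∧
    (∀ k, δ * maxFree E P ≤ (volume (Q k).set).toReal) ∧
    c * (volume P.set).toReal ≤ ∑ k, (volume (Q k).set).toReal

/-- A set is weakly porous if it is weakly porous with some constants `0 < c, δ < 1`. -/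
def WeaklyPorous {n : ℕ} (E : Set (EuclideanSpace ℝ (Fin n))) : Prop :=
  ∃ c δ : ℝ, 0 < c ∧ c < 1 ∧ 0 < δ ∧ δ < 1 ∧ WeaklyPorousWith E c δ

/-- Porosity. -/
def Porous {n : ℕ} (E : Set (EuclideanSpace ℝ (Fin n))) : Prop :=
  ∃ c : ℝ, 0 < c ∧ ∀ (x : EuclideanSpace ℝ (Fin n)) (r : ℝ), 0 < r →
    ∃ y : EuclideanSpace ℝ (Fin n), ball y (c * r) ⊆ ball x r \ E

/-- The distance weight `dist(·,E)^{-α}`. -/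
def distw {n : ℕ} (E : Set (EuclideanSpace ℝ (Fin n))) (α : ℝ)
    (x : EuclideanSpace ℝ (Fin n)) : ℝ :=
  infDist x E ^ (-α)

/-- `h_E(B(x,R))`: the supremum of radii `t` of balls contained in `B(x,R) \ E`. -/
def hFree {n : ℕ} (E : Set (EuclideanSpace ℝ (Fin n))) (x : EuclideanSpace ℝ (Fin n))
    (R : ℝ) : ℝ :=
  sSup {t : ℝ | ∃ y ∈ ball x R, ball y t ⊆ ball x R \ E}

/-- The set of admissible exponents in the definition of the Muckenhoupt exponent. -/
def MuckSet {n : ℕ} (E : Set (EuclideanSpace ℝ (Fin n))) : Set ℝ :=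
  {α : ℝ | ∃ C : ℝ, ∀ x ∈ E, ∀ R r : ℝ, 0 < r → r < hFree E x R → hFree E x R ≤ R →
    (volume (thickening r E ∩ ball x R)).toReal ≤
      C * (hFree E x R / r) ^ (-α) * (volume (ball x R)).toReal}

open scoped Classical in
/-- The Muckenhoupt exponent of `E`. -/
def MuckExp {n : ℕ} (E : Set (EuclideanSpace ℝ (Fin n))) : ℝ :=
  if ∀ x ∈ E, ∀ R : ℝ, 0 < R → 0 < hFree E x R then sSup (MuckSet E) else 0

end

section
variable {n : ℕ}

theorem cube_volume (P : Cube n) : volume P.set = ENNReal.ofReal (P.l ^ n) := by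
  have h : P.set = (MeasurableEquiv.toLp 2 (Fin n → ℝ)).symm ⁻¹'
        (Set.univ.pi fun i => Set.Ico (P.a i) (P.a i + P.l)) := by
    ext x
    simp [Cube.set, Set.mem_pi, Set.mem_Ico]
  rw [h, (EuclideanSpace.volume_preserving_symm_measurableEquiv_toLp (Fin n)).measure_preimage
    ((MeasurableSet.univ_pi fun i => measurableSet_Ico).nullMeasurableSet)]
  rw [volume_pi_pi]
  simp [Real.volume_Ico, ← ENNReal.ofReal_pow P.pos.le]

theorem cube_volume_toReal (P : Cube n) : (volume P.set).toReal = P.l ^ n := by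
  have := P.pos
  rw [cube_volume]; exact ENNReal.toReal_ofReal (by positivity)

theorem dyadic_trans {P Q R : Cube n} (h1 : IsDyadicSubcube P Q)
    (h2 : IsDyadicSubcube Q R) : IsDyadicSubcube P R := by
  obtain ⟨j, k, hk, hl, ha⟩ := h1
  obtain ⟨j', k', hk', hl', ha'⟩ := h2
  refine ⟨j + j', fun i => k i * 2 ^ j' + k' i, fun i => ?_, ?_, fun i => ?_⟩
  · have h1 := hk i; have h2 := hk' i
    calc k i * 2 ^ j' + k' i < (k i + 1) * 2 ^ j' := by nlinarith
      _ ≤ 2 ^ j * 2 ^ j' := Nat.mul_le_mul_right _ h1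
      _ = 2 ^ (j + j') := (pow_add 2 j j').symm
  · rw [hl', hl, pow_add, div_div]
  · rw [ha' i, ha i, hl]
    push_cast
    field_simp
    ring

noncomputable def sub2 (Q : Cube n) (s : Fin n → Fin 2) : Cube n where
  a := WithLp.toLp 2 (fun i => Q.a i + Q.l * (1 + (s i : ℕ)) / 4)
  l := Q.l / 4
  pos := by have := Q.pos; positivity

theorem sub2_isDyadic (Q : Cube n) (s : Fin n → Fin 2) : IsDyadicSubcube Q (sub2 Q s) := by
  refine ⟨2, fun i => 1 + (s i : ℕ), fun i => ?_, by norm_num [sub2], fun i => ?_⟩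
  · show 1 + (s i : ℕ) < 2 ^ 2
    have := (s i).isLt; omega
  · show Q.a i + Q.l * (1 + (s i : ℕ)) / 4 = _
    push_cast
    norm_num

theorem sub2_mem {Q : Cube n} {s : Fin n → Fin 2} {x : EuclideanSpace ℝ (Fin n)}
    (hx : x ∈ (sub2 Q s).set) (i : Fin n) :
    Q.a i + Q.l * (1 + (s i : ℕ)) / 4 ≤ x i ∧ x i < Q.a i + Q.l * (1 + (s i : ℕ)) / 4 + Q.l / 4 :=
  hx i

theorem sub2_subset (Q : Cube n) (s : Fin n → Fin 2) : (sub2 Q s).set ⊆ Q.set := by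
  intro x hx i
  obtain ⟨h1, h2⟩ := sub2_mem hx i
  have hs : ((s i : ℕ) : ℝ) ≤ 1 := by have := (s i).isLt; exact_mod_cast Nat.lt_succ_iff.mp this
  have hs0 : (0:ℝ) ≤ ((s i : ℕ) : ℝ) := Nat.cast_nonneg _
  have hl := Q.pos
  constructor <;> nlinarith

theorem sub2_efree {E : Set (EuclideanSpace ℝ (Fin n))} {Q : Cube n} (h : EFree E Q)
    (s : Fin n → Fin 2) : EFree (closure E) (sub2 Q s) := by
  rw [EFree, eq_empty_iff_forall_notMem]
  rintro x ⟨hx, hxc⟩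
  set U : Set (EuclideanSpace ℝ (Fin n)) :=
    ⋂ i, (fun y : EuclideanSpace ℝ (Fin n) => y i) ⁻¹' Set.Ioo (Q.a i) (Q.a i + Q.l) with hU
  have hUopen : IsOpen U :=
    isOpen_iInter_of_finite fun i => isOpen_Ioo.preimage (by fun_prop)
  have hUQ : U ⊆ Q.set := by
    intro y hy i
    have := Set.mem_iInter.mp hy i
    exact ⟨this.1.le, this.2⟩
  have hxU : x ∈ U := by
    rw [hU, Set.mem_iInter]
    intro i
    obtain ⟨h1, h2⟩ := sub2_mem hx i
    have hs : ((s i : ℕ) : ℝ) ≤ 1 := by have := (s i).isLt; exact_mod_cast Nat.lt_succ_iff.mp this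
    have hs0 : (0:ℝ) ≤ ((s i : ℕ) : ℝ) := Nat.cast_nonneg _
    have hl := Q.pos
    simp only [Set.mem_preimage, Set.mem_Ioo]
    constructor <;> nlinarith
  obtain ⟨y, hyU, hyE⟩ := _root_.mem_closure_iff.mp hxc U hUopen hxU
  have : y ∈ Q.set ∩ E := ⟨hUQ hyU, hyE⟩
  rw [h] at this
  exact this

theorem cube_disjoint {A B : Cube n} (i : Fin n)
    (h : A.a i + A.l ≤ B.a i ∨ B.a i + B.l ≤ A.a i) : Disjoint A.set B.set := by
  rw [Set.disjoint_left]
  intro x hA hB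
  obtain ⟨hA1, hA2⟩ := hA i
  obtain ⟨hB1, hB2⟩ := hB i
  rcases h with h | h <;> linarith

theorem sub2_disjoint (Q : Cube n) {s t : Fin n → Fin 2} (hst : s ≠ t) :
    Disjoint (sub2 Q s).set (sub2 Q t).set := by
  obtain ⟨i, hi⟩ := Function.ne_iff.mp hst
  apply cube_disjoint i
  have hl := Q.pos
  have hne : (s i : ℕ) ≠ (t i : ℕ) := fun h => hi (Fin.ext h)
  have hlt1 := (s i).isLt; have hlt2 := (t i).isLt
  have hnat : (s i : ℕ) + 1 ≤ (t i : ℕ) ∨ (t i : ℕ) + 1 ≤ (s i : ℕ) := by omega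
  have hcast : ((s i : ℕ) : ℝ) + 1 ≤ ((t i : ℕ) : ℝ) ∨ ((t i : ℕ) : ℝ) + 1 ≤ ((s i : ℕ) : ℝ) := by
    rcases hnat with h | h
    · left; exact_mod_cast h
    · right; exact_mod_cast h
  rcases hcast with h | h
  · left
    show Q.a i + Q.l * (1 + (s i : ℕ)) / 4 + Q.l / 4 ≤ Q.a i + Q.l * (1 + (t i : ℕ)) / 4
    nlinarith
  · right
    show Q.a i + Q.l * (1 + (t i : ℕ)) / 4 + Q.l / 4 ≤ Q.a i + Q.l * (1 + (s i : ℕ)) / 4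
    nlinarith

theorem freeSet_bddAbove (E : Set (EuclideanSpace ℝ (Fin n))) (P : Cube n) :
    BddAbove {v : ℝ | ∃ Q : Cube n, IsDyadicSubcube P Q ∧ EFree E Q ∧ v = (volume Q.set).toReal} := by
  refine ⟨P.l ^ n, ?_⟩
  rintro v ⟨Q, ⟨j, k, hk, hl, ha⟩, _, rfl⟩
  rw [cube_volume_toReal]
  have hP := P.pos
  have h1 : Q.l ≤ P.l := by
    rw [hl]
    have : (1:ℝ) ≤ 2 ^ j := one_le_pow₀ (by norm_num)
    rw [div_le_iff₀ (by positivity)]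
    nlinarith
  exact pow_le_pow_left₀ Q.pos.le h1 n

theorem maxFree_nonneg (E : Set (EuclideanSpace ℝ (Fin n))) (P : Cube n) :
    0 ≤ maxFree E P := by
  apply Real.sSup_nonneg
  rintro v ⟨Q, _, _, rfl⟩
  exact ENNReal.toReal_nonneg

theorem maxFree_mono (E : Set (EuclideanSpace ℝ (Fin n))) (P : Cube n) :
    maxFree (closure E) P ≤ maxFree E P := by
  apply Real.sSup_le _ (maxFree_nonneg E P)
  rintro v ⟨Q, h1, h2, rfl⟩
  apply le_csSup (freeSet_bddAbove E P)
  refine ⟨Q, h1, ?_, rfl⟩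
  rw [EFree, eq_empty_iff_forall_notMem] at h2 ⊢
  rintro x ⟨hx1, hx2⟩
  exact h2 x ⟨hx1, subset_closure hx2⟩

theorem maxFree_le_closure (E : Set (EuclideanSpace ℝ (Fin n))) (P : Cube n) :
    maxFree E P ≤ 4 ^ n * maxFree (closure E) P := by
  have h4 : (0:ℝ) < 4 ^ n := by positivity
  apply Real.sSup_le _ (by have := maxFree_nonneg (closure E) P; positivity)
  rintro v ⟨Q, h1, h2, rfl⟩
  have key : ((Q.l / 4) ^ n : ℝ) ≤ maxFree (closure E) P := by
    apply le_csSup (freeSet_bddAbove (closure E) P)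
    exact ⟨sub2 Q (fun _ => 0), dyadic_trans h1 (sub2_isDyadic Q _), sub2_efree h2 _, by rw [cube_volume_toReal]; rfl⟩
  rw [cube_volume_toReal]
  rw [div_pow] at key
  calc Q.l ^ n = 4 ^ n * (Q.l ^ n / 4 ^ n) := by field_simp
    _ ≤ 4 ^ n * maxFree (closure E) P := by gcongr

theorem sub2_vol (Q : Cube n) (s : Fin n → Fin 2) :
    (volume (sub2 Q s).set).toReal = (volume Q.set).toReal / 4 ^ n := by
  rw [cube_volume_toReal, cube_volume_toReal]
  show ((Q.l / 4) ^ n) = _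
  rw [div_pow]

end


/-- `E` is weakly porous if and only if its closure is weakly porous. -/
theorem weaklyPorous_iff_closure {n : ℕ} (E : Set (EuclideanSpace ℝ (Fin n))) :
    WeaklyPorous E ↔ WeaklyPorous (closure E) := by
  have h4 : (0:ℝ) < 4 ^ n := by positivity
  have h2n : (0:ℝ) < 2 ^ n := by positivity
  have h14 : (1:ℝ) ≤ 4 ^ n := one_le_pow₀ (by norm_num)
  have h12 : (1:ℝ) ≤ 2 ^ n := one_le_pow₀ (by norm_num)
  constructor
  · rintro ⟨c, δ, hc0, hc1, hδ0, hδ1, H⟩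
    refine ⟨c / 2 ^ n, δ / 4 ^ n, by positivity, ?_, by positivity, ?_, ?_⟩
    · calc c / 2 ^ n ≤ c := by
            rw [div_le_iff₀ h2n]; nlinarith
        _ < 1 := hc1
    · calc δ / 4 ^ n ≤ δ := by
            rw [div_le_iff₀ h4]; nlinarith
        _ < 1 := hδ1
    · intro P
      obtain ⟨N, Q, hQ1, hQ2, hQ3, hQ4⟩ := H P
      have e := Fintype.equivFin (Fin N × (Fin n → Fin 2))
      refine ⟨Fintype.card (Fin N × (Fin n → Fin 2)),
        fun m => sub2 (Q (e.symm m).1) (e.symm m).2, fun m => ⟨?_, ?_⟩, ?_, ?_, ?_⟩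
      · exact dyadic_trans (hQ1 _).1 (sub2_isDyadic _ _)
      · exact sub2_efree (hQ1 _).2 _
      · intro k m hkm
        have hne : e.symm k ≠ e.symm m := fun h => hkm (by simpa using congrArg e h)
        rcases eq_or_ne (e.symm k).1 (e.symm m).1 with h1 | h1
        · have h2' : (e.symm k).2 ≠ (e.symm m).2 := fun h2'' => hne (Prod.ext h1 h2'')
          show Disjoint (sub2 (Q (e.symm k).1) (e.symm k).2).set
            (sub2 (Q (e.symm m).1) (e.symm m).2).set
          rw [h1]
          exact sub2_disjoint _ h2'
        · exact (hQ2 _ _ h1).mono (sub2_subset _ _) (sub2_subset _ _)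
      · intro m
        rw [sub2_vol]
        have h3 := hQ3 (e.symm m).1
        calc δ / 4 ^ n * maxFree (closure E) P ≤ δ / 4 ^ n * maxFree E P := by
              have := maxFree_mono E P; gcongr
          _ = δ * maxFree E P / 4 ^ n := by ring
          _ ≤ _ := by gcongr
      · have hsum : ∑ m : Fin (Fintype.card (Fin N × (Fin n → Fin 2))),
            (volume (sub2 (Q (e.symm m).1) (e.symm m).2).set).toReal
            = ∑ p : Fin N × (Fin n → Fin 2), (volume (sub2 (Q p.1) p.2).set).toReal :=
          Fintype.sum_equiv e.symm _ _ (fun m => rfl)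
        rw [hsum, Fintype.sum_prod_type]
        have hs : ∀ k, ∑ s : Fin n → Fin 2, (volume (sub2 (Q k) s).set).toReal
            = 2 ^ n * ((volume (Q k).set).toReal / 4 ^ n) := by
          intro k
          rw [Finset.sum_congr rfl (fun s _ => sub2_vol (Q k) s), Finset.sum_const]
          simp [Finset.card_univ, mul_comm]
        rw [Finset.sum_congr rfl (fun k _ => hs k)]
        have h42 : (4:ℝ) ^ n = 2 ^ n * 2 ^ n := by
          rw [← mul_pow]; norm_num
        calc c / 2 ^ n * (volume P.set).toReal = (c * (volume P.set).toReal) / 2 ^ n := by ring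
          _ ≤ (∑ k, (volume (Q k).set).toReal) / 2 ^ n := by gcongr
          _ = ∑ k, 2 ^ n * ((volume (Q k).set).toReal / 4 ^ n) := by
              rw [Finset.sum_div]
              apply Finset.sum_congr rfl
              intro k _
              rw [h42]
              field_simp
          _ ≤ _ := le_refl _
  · rintro ⟨c, δ, hc0, hc1, hδ0, hδ1, H⟩
    refine ⟨c, δ / 4 ^ n, hc0, hc1, by positivity, ?_, ?_⟩
    · calc δ / 4 ^ n ≤ δ := by rw [div_le_iff₀ h4]; nlinarith
        _ < 1 := hδ1
    · intro P
      obtain ⟨N, Q, hQ1, hQ2, hQ3, hQ4⟩ := H P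
      refine ⟨N, Q, fun k => ⟨(hQ1 k).1, ?_⟩, hQ2, ?_, hQ4⟩
      · have h := (hQ1 k).2
        rw [EFree, Set.eq_empty_iff_forall_notMem] at h ⊢
        rintro x ⟨hx1, hx2⟩
        exact h x ⟨hx1, subset_closure hx2⟩
      · intro k
        calc δ / 4 ^ n * maxFree E P
            ≤ δ / 4 ^ n * (4 ^ n * maxFree (closure E) P) := by
              have := maxFree_le_closure E P; gcongr
          _ = δ * maxFree (closure E) P := by field_simp
          _ ≤ _ := hQ3 k
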